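/- Define ψ : ℝ⁵ → ℝ³ by ψ(A₁, A₂, x, ε₁, ε₂) = (A₁ + ε₁A₂ + ε₂, A₁x^{D₁} + A₂x^{D₂} + Bx² - K/r, D₁A₁x^{D₁} + D₂A₂x^{D₂} + 2Bx²). At the point (A₁^∞, A₂^∞, x*^∞, 0, 0) with A₁^∞ = 0, x*^∞ = ((-D₂/(2-D₂))·(K/r)/B)^{1/2}, A₂^∞ = (2/(2-D₂))·(K/r)·(x*^∞)^{-D₂}, the determinant of the Jacobian of ψ with respect to (A₁, A₂, x) equals (4 - 2D₂)·B·(x*^∞)^{D₂+1}, which is nonzero. -/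

import Mathlib

open Real

/-- The Jacobian determinant of `ψ` with respect to `(A₁, A₂, x)` at the limit point
`(A₁^∞, A₂^∞, x*^∞, 0, 0)` equals `(4 - 2D₂)·B·(x*^∞)^{D₂+1} ≠ 0`. -/
theorem jacobian_det_ne_zero (D₁ D₂ B K r : ℝ)
    (hD₂ : D₂ < 0) (hD₁ : 2 < D₁) (hB : 0 < B) (hK : 0 < K) (hr : 0 < r)
    (xs A₂s : ℝ)
    (hxs : xs = Real.sqrt (-D₂ / (2 - D₂) * (K / r) / B))
    (hA₂ : A₂s = 2 / (2 - D₂) * (K / r) * xs ^ (-D₂))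
    (ψ₁ ψ₂ ψ₃ : ℝ → ℝ → ℝ → ℝ → ℝ → ℝ)
    (hψ₁ : ∀ a₁ a₂ x e₁ e₂, ψ₁ a₁ a₂ x e₁ e₂ = a₁ + e₁ * a₂ + e₂)
    (hψ₂ : ∀ a₁ a₂ x e₁ e₂, ψ₂ a₁ a₂ x e₁ e₂ = a₁ * x ^ D₁ + a₂ * x ^ D₂ + B * x ^ (2 : ℕ) - K / r)
    (hψ₃ : ∀ a₁ a₂ x e₁ e₂, ψ₃ a₁ a₂ x e₁ e₂ = D₁ * a₁ * x ^ D₁ + D₂ * a₂ * x ^ D₂ + 2 * B * x ^ (2 : ℕ)) :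
    Matrix.det
      !![deriv (fun a => ψ₁ a A₂s xs 0 0) 0, deriv (fun a => ψ₁ 0 a xs 0 0) A₂s,
           deriv (fun x => ψ₁ 0 A₂s x 0 0) xs;
         deriv (fun a => ψ₂ a A₂s xs 0 0) 0, deriv (fun a => ψ₂ 0 a xs 0 0) A₂s,
           deriv (fun x => ψ₂ 0 A₂s x 0 0) xs;
         deriv (fun a => ψ₃ a A₂s xs 0 0) 0, deriv (fun a => ψ₃ 0 a xs 0 0) A₂s,
           deriv (fun x => ψ₃ 0 A₂s x 0 0) xs]
      = (4 - 2 * D₂) * B * xs ^ (D₂ + 1) ∧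
    (4 - 2 * D₂) * B * xs ^ (D₂ + 1) ≠ 0 := by
  have hx : 0 < xs := by
    rw [hxs]
    apply Real.sqrt_pos.mpr
    have h1 : 0 < -D₂ / (2 - D₂) := by
      apply div_pos (by linarith) (by linarith)
    positivity
  have hxne : xs ≠ 0 := hx.ne'
  -- entries
  have e11 : deriv (fun a => ψ₁ a A₂s xs 0 0) 0 = 1 := by
    simp only [hψ₁]; simp
  have e12 : deriv (fun a => ψ₁ 0 a xs 0 0) A₂s = 0 := by
    simp only [hψ₁]; simp
  have e13 : deriv (fun x => ψ₁ 0 A₂s x 0 0) xs = 0 := by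
    simp only [hψ₁]; simp
  have e21 : deriv (fun a => ψ₂ a A₂s xs 0 0) 0 = xs ^ D₁ := by
    simp only [hψ₂]
    have : HasDerivAt (fun a : ℝ => a * xs ^ D₁ + A₂s * xs ^ D₂ + B * xs ^ (2:ℕ) - K / r)
        (xs ^ D₁) 0 := by
      simpa using ((((hasDerivAt_id (0:ℝ)).mul_const (xs ^ D₁)).add_const
        (A₂s * xs ^ D₂)).add_const (B * xs ^ (2:ℕ))).sub_const (K / r)
    exact this.deriv
  have e22 : deriv (fun a => ψ₂ 0 a xs 0 0) A₂s = xs ^ D₂ := by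
    simp only [hψ₂]
    have : HasDerivAt (fun a : ℝ => 0 * xs ^ D₁ + a * xs ^ D₂ + B * xs ^ (2:ℕ) - K / r)
        (xs ^ D₂) A₂s := by
      have h := ((hasDerivAt_id A₂s).mul_const (xs ^ D₂)).const_add (0 * xs ^ D₁)
      have h2 := (h.add_const (B * xs ^ (2:ℕ))).sub_const (K / r)
      simpa [add_assoc] using h2.congr_deriv (by ring)
    exact this.deriv
  have e23 : deriv (fun x => ψ₂ 0 A₂s x 0 0) xs
      = A₂s * (D₂ * xs ^ (D₂ - 1)) + B * (2 * xs) := by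
    simp only [hψ₂]
    have h1 : HasDerivAt (fun x : ℝ => x ^ D₂) (D₂ * xs ^ (D₂ - 1)) xs :=
      Real.hasDerivAt_rpow_const (Or.inl hxne)
    have h2 : HasDerivAt (fun x : ℝ => x ^ (2:ℕ)) (2 * xs) xs := by
      simpa using hasDerivAt_pow 2 xs
    have hd : HasDerivAt (fun x : ℝ => A₂s * x ^ D₂ + B * x ^ (2:ℕ) - K / r)
        (A₂s * (D₂ * xs ^ (D₂ - 1)) + B * (2 * xs)) xs :=
      ((h1.const_mul A₂s).add (h2.const_mul B)).sub_const (K / r)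
    simp only [zero_mul, zero_add]
    exact hd.deriv
  have e31 : deriv (fun a => ψ₃ a A₂s xs 0 0) 0 = D₁ * xs ^ D₁ := by
    simp only [hψ₃]
    have : HasDerivAt (fun a : ℝ => D₁ * a * xs ^ D₁ + D₂ * A₂s * xs ^ D₂ + 2 * B * xs ^ (2:ℕ))
        (D₁ * xs ^ D₁) 0 := by
      have h := ((hasDerivAt_id (0:ℝ)).const_mul D₁).mul_const (xs ^ D₁)
      have h2 := h.add_const (D₂ * A₂s * xs ^ D₂ + 2 * B * xs ^ (2:ℕ))
      simpa [add_assoc] using h2.congr_deriv (by ring)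
    exact this.deriv
  have e32 : deriv (fun a => ψ₃ 0 a xs 0 0) A₂s = D₂ * xs ^ D₂ := by
    simp only [hψ₃]
    have : HasDerivAt (fun a : ℝ => D₁ * 0 * xs ^ D₁ + D₂ * a * xs ^ D₂ + 2 * B * xs ^ (2:ℕ))
        (D₂ * xs ^ D₂) A₂s := by
      have h := (((hasDerivAt_id A₂s).const_mul D₂).mul_const (xs ^ D₂)).const_add
        (D₁ * 0 * xs ^ D₁)
      have h2 := h.add_const (2 * B * xs ^ (2:ℕ))
      simpa [add_assoc] using h2.congr_deriv (by ring)
    exact this.deriv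
  have e33 : deriv (fun x => ψ₃ 0 A₂s x 0 0) xs
      = D₂ * A₂s * (D₂ * xs ^ (D₂ - 1)) + 2 * B * (2 * xs) := by
    simp only [hψ₃]
    have h1 : HasDerivAt (fun x : ℝ => x ^ D₂) (D₂ * xs ^ (D₂ - 1)) xs :=
      Real.hasDerivAt_rpow_const (Or.inl hxne)
    have h2 : HasDerivAt (fun x : ℝ => x ^ (2:ℕ)) (2 * xs) xs := by
      simpa using hasDerivAt_pow 2 xs
    have hd : HasDerivAt (fun x : ℝ => D₂ * A₂s * x ^ D₂ + 2 * B * x ^ (2:ℕ))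
        (D₂ * A₂s * (D₂ * xs ^ (D₂ - 1)) + 2 * B * (2 * xs)) xs :=
      (h1.const_mul (D₂ * A₂s)).add (h2.const_mul (2 * B))
    simp only [mul_zero, zero_mul, zero_add]
    exact hd.deriv
  have hsub : xs ^ (D₂ - 1) = xs ^ D₂ / xs := by
    rw [Real.rpow_sub hx, Real.rpow_one]
  have hadd : xs ^ (D₂ + 1) = xs ^ D₂ * xs := by
    rw [Real.rpow_add hx, Real.rpow_one]
  constructor
  · simp only [Matrix.det_fin_three, Matrix.cons_val', Matrix.cons_val_zero,
      Matrix.cons_val_one, Matrix.head_cons, Matrix.empty_val', Matrix.cons_val_fin_one,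
      Matrix.head_fin_const, Matrix.cons_val_two, Matrix.tail_cons,
      Matrix.of_apply,
      e11, e12, e13, e21, e22, e23, e31, e32, e33, hsub, hadd]
    field_simp
    ring
  · have h1 : (0:ℝ) < 4 - 2 * D₂ := by linarith
    have h2 : (0:ℝ) < xs ^ (D₂ + 1) := Real.rpow_pos_of_pos hx _
    positivity
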